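/- (2^r recursive family) Define 2×2 arrays A_2(x) with rows (x, x+1), (x+2, x+3) and A'_2(x) with rows (x+3, x+1), (x+2, x). For r > 1 recursively define the 2^r × 2^r arrays A_{2^r}(x) with diagonal blocks I_{2^{r−1}}(x) and I_{2^{r−1}}(x+1) and off-diagonal blocks A_{2^{r−1}}(x+2) (top right) and A'_{2^{r−1}}(x+2) (bottom left), and A'_{2^r}(x) identical except the two diagonal blocks are swapped. Then for all r ≥ 1, the pair {A_{2^r}(x), A'_{2^r}(x)} is Blackburn-compatible with respect to I_{2^r}(t) for any t not among the integers of A_{2^r}(x) and A'_{2^r}(x); moreover each of A_{2^r}(x) and A'_{2^r}(x) has exactly 2^r − r − 1 stars per column, and the lifted 2^{r+1} × 2^{r+1} block array (with A_{2^r}(x), A'_{2^r}(x) on the diagonal and integer-disjoint copies of I_{2^r} off-diagonal) is a 2^r-regular (2^{r+1}, 2^{r+1}, 2^{r+1} − r − 2, 2r + 4) PDA. -/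

import Mathlib

open Finset

/-- Number of stars (`none`) in column `k` of the array `P`. -/
def colStars {f K : ℕ} (P : Fin f → Fin K → Option ℕ) (k : Fin K) : ℕ :=
  (Finset.univ.filter fun j => P j k = none).card

/-- `P` is a `(K, f, Z, S)` placement delivery array: an `f × K` array over `{∗} ∪ S`
(`none` encodes `∗`) with exactly `Z` stars in each column, every integer of `S`
occurring at least once (and all integer entries lying in `S`), satisfying the
Blackburn property. -/
def IsPDA {f K : ℕ} (P : Fin f → Fin K → Option ℕ) (Z : ℕ) (S : Finset ℕ) : Prop :=
  (∀ k, colStars P k = Z) ∧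
  (∀ s ∈ S, ∃ j k, P j k = some s) ∧
  (∀ j k s, P j k = some s → s ∈ S) ∧
  (∀ j₁ k₁ j₂ k₂ s, (j₁, k₁) ≠ (j₂, k₂) →
    P j₁ k₁ = some s → P j₂ k₂ = some s → P j₁ k₂ = none ∧ P j₂ k₁ = none)

/-- Every integer of `S` appears exactly `g` times in the array `P`. -/
def IsRegularPDA {f K : ℕ} (P : Fin f → Fin K → Option ℕ) (S : Finset ℕ) (g : ℕ) : Prop :=
  ∀ s ∈ S, ((Finset.univ : Finset (Fin f × Fin K)).filter
    (fun jk => P jk.1 jk.2 = some s)).card = g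

/-- `P₀` and `P₁` are Blackburn-compatible with respect to `Pstar`. -/
def BBCompat {n m : ℕ} (P₀ P₁ Pstar : Fin n → Fin m → Option ℕ) : Prop :=
  ∀ i₀ j₀ i₁ j₁ s, P₀ i₀ j₀ = some s → P₁ i₁ j₁ = some s →
    Pstar i₀ j₁ = none ∧ Pstar i₁ j₀ = none

/-- `Ig n t` is the `n × n` array with the integer `t` on the main diagonal and `∗`
elsewhere. -/
def Ig (n t : ℕ) : Fin n → Fin n → Option ℕ := fun i j => if i = j then some t else none

/-- Block-row index of a global index for an array built from `a × a` grids of `b`-sized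
blocks. -/
def blkIdx {a b : ℕ} (j : Fin (a * b)) : Fin a :=
  ⟨(j : ℕ) / b, Nat.div_lt_of_lt_mul (Nat.mul_comm a b ▸ j.isLt)⟩

/-- Within-block index of a global index. -/
def inIdx {a b : ℕ} (j : Fin (a * b)) : Fin b :=
  ⟨(j : ℕ) % b, Nat.mod_lt _ (by
    rcases Nat.eq_zero_or_pos b with h | h
    · exact absurd j.isLt (by simp [h])
    · exact h)⟩

/-- The recursive family `A_{2^r}(x)` (flag `false`) and `A'_{2^r}(x)` (flag `true`),
as `ℕ`-indexed arrays meaningful on `[0, 2^r) × [0, 2^r)`. -/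
def A2r : ℕ → Bool → ℕ → ℕ → ℕ → Option ℕ
  | 0, _, x, _, _ => some x
  | 1, false, x, i, j =>
      if i = 0 then (if j = 0 then some x else some (x + 1))
      else if j = 0 then some (x + 2) else some (x + 3)
  | 1, true, x, i, j =>
      if i = 0 then (if j = 0 then some (x + 3) else some (x + 1))
      else if j = 0 then some (x + 2) else some x
  | (r + 2), b, x, i, j =>
      if i < 2 ^ (r + 1) then
        if j < 2 ^ (r + 1) then
          (if i = j then some (if b then x + 1 else x) else none)
        else A2r (r + 1) false (x + 2) i (j - 2 ^ (r + 1))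
      else
        if j < 2 ^ (r + 1) then A2r (r + 1) true (x + 2) (i - 2 ^ (r + 1)) j
        else (if i = j then some (if b then x else x + 1) else none)


lemma sum_ind_eq (n i : ℕ) (hi : i < n) : ∑ j ∈ range n, (if i = j then (1:ℕ) else 0) = 1 := by
  rw [Finset.sum_ite_eq]; simp [hi]

lemma sum_ind_ne (n i : ℕ) (hi : i < n) : ∑ j ∈ range n, (if i = j then (0:ℕ) else 1) = n - 1 := by
  have hadd : (∑ j ∈ range n, (if i = j then (0:ℕ) else 1)) + (∑ j ∈ range n, (if i = j then (1:ℕ) else 0)) = n := by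
    rw [← Finset.sum_add_distrib]
    have : ∀ j ∈ range n, ((if i = j then (0:ℕ) else 1) + (if i = j then 1 else 0)) = 1 := by
      intro j _; split_ifs <;> rfl
    rw [Finset.sum_congr rfl this, Finset.sum_const, card_range, smul_eq_mul, mul_one]
  rw [sum_ind_eq n i hi] at hadd; omega

lemma quad (n : ℕ) (F : ℕ → ℕ → ℕ) :
    ∑ i ∈ range (n+n), ∑ j ∈ range (n+n), F i j
      = ((∑ i ∈ range n, ∑ j ∈ range n, F i j) + ∑ i ∈ range n, ∑ j ∈ range n, F i (n+j))
        + ((∑ i ∈ range n, ∑ j ∈ range n, F (n+i) j) + ∑ i ∈ range n, ∑ j ∈ range n, F (n+i) (n+j)) := by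
  rw [Finset.sum_range_add]
  congr 1 <;> rw [← Finset.sum_add_distrib] <;>
    exact Finset.sum_congr rfl fun i _ => Finset.sum_range_add _ n n

lemma Aval : ∀ (m : ℕ) (b : Bool) (x i j s : ℕ), i < 2^(m+1) → j < 2^(m+1) →
    A2r (m+1) b x i j = some s → x ≤ s ∧ s < x + 2*m + 4 := by
  intro m
  induction m with
  | zero =>
    intro b x i j s hi hj h
    interval_cases i <;> interval_cases j <;> cases b <;> simp [A2r] at h <;> omega
  | succ m ih =>
    intro b x i j s hi hj h
    set n := 2^(m+1) with hn
    have hnn : 2^(m+1+1) = n + n := by rw [hn]; ring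
    have h : A2r (m+2) b x i j = some s := h
    rw [A2r] at h
    by_cases h1 : i < n <;> by_cases h2 : j < n <;> simp only [h1, h2, if_true, if_false, ← hn] at h
    · split_ifs at h <;> cases b <;> simp_all <;> omega
    · have := ih false (x+2) i (j - n) s h1 (by omega) h
      omega
    · have := ih true (x+2) (i - n) j s (by omega) h2 h
      omega
    · split_ifs at h <;> cases b <;> simp_all <;> omega

lemma ite_some {i j d s : ℕ} (h : (if i = j then some d else none) = some s) :
    i = j ∧ d = s := by split_ifs at h <;> simp_all

lemma Across : ∀ (m x i j i' j' s : ℕ), i < 2^(m+1) → j < 2^(m+1) → i' < 2^(m+1) → j' < 2^(m+1) →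
    A2r (m+1) false x i j = some s → A2r (m+1) true x i' j' = some s →
    i ≠ j' ∧ i' ≠ j := by
  intro m
  induction m with
  | zero =>
    intro x i j i' j' s hi hj hi' hj' h0 h1
    interval_cases i <;> interval_cases j <;> interval_cases i' <;> interval_cases j' <;>
      simp [A2r] at h0 h1 <;> omega
  | succ m ih =>
    intro x i j i' j' s hi hj hi' hj' h0 h1
    set n := 2^(m+1) with hn
    have hN : 2^(m+1+1) = n + n := by rw [hn]; ring
    have hmono : ∀ (b : Bool) (y a c : ℕ), a < n → c < n → A2r (m+1) b y a c = some s → y ≤ s :=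
      fun b y a c ha hc h => (Aval m b y a c s ha hc h).1
    have h0 : A2r (m+2) false x i j = some s := h0
    have h1 : A2r (m+2) true x i' j' = some s := h1
    rw [A2r] at h0 h1
    by_cases a1 : i < n <;> by_cases a2 : j < n <;>
      simp only [← hn, a1, a2, if_true, if_false, Bool.false_eq_true, Bool.true_eq_false, ite_true, ite_false] at h0 <;>
    by_cases a3 : i' < n <;> by_cases a4 : j' < n <;>
      simp only [← hn, a3, a4, if_true, if_false, Bool.false_eq_true, Bool.true_eq_false, ite_true, ite_false] at h1
    · obtain ⟨e0, hs0⟩ := ite_some h0; obtain ⟨e1, hs1⟩ := ite_some h1; omega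
    · obtain ⟨e0, hs0⟩ := ite_some h0
      have := hmono false (x+2) i' (j'-n) a3 (by omega) h1; omega
    · obtain ⟨e0, hs0⟩ := ite_some h0
      have := hmono true (x+2) (i'-n) j' (by omega) a4 h1; omega
    · exact ⟨by omega, by omega⟩
    · obtain ⟨e1, hs1⟩ := ite_some h1
      have := hmono false (x+2) i (j-n) a1 (by omega) h0; omega
    · exact ⟨by omega, by omega⟩
    · have := ih (x+2) i (j-n) (i'-n) j' s a1 (by omega) (by omega) a4 h0 h1
      omega
    · obtain ⟨e1, hs1⟩ := ite_some h1
      have := hmono false (x+2) i (j-n) a1 (by omega) h0; omega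
    · obtain ⟨e1, hs1⟩ := ite_some h1
      have := hmono true (x+2) (i-n) j (by omega) a2 h0; omega
    · have := ih (x+2) i' (j'-n) (i-n) j s a3 (by omega) (by omega) a2 h1 h0
      omega
    · exact ⟨by omega, by omega⟩
    · obtain ⟨e1, hs1⟩ := ite_some h1
      have := hmono true (x+2) (i-n) j (by omega) a2 h0; omega
    · exact ⟨by omega, by omega⟩
    · obtain ⟨e0, hs0⟩ := ite_some h0
      have := hmono false (x+2) i' (j'-n) a3 (by omega) h1; omega
    · obtain ⟨e0, hs0⟩ := ite_some h0
      have := hmono true (x+2) (i'-n) j' (by omega) a4 h1; omega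
    · obtain ⟨e0, hs0⟩ := ite_some h0; obtain ⟨e1, hs1⟩ := ite_some h1; omega

lemma entry_TL {m : ℕ} {b : Bool} {x i j : ℕ} (h1 : i < 2^(m+1)) (h2 : j < 2^(m+1)) (h3 : i ≠ j) :
    A2r (m+2) b x i j = none := by rw [A2r]; simp [h1, h2, h3]

lemma entry_BR {m : ℕ} {b : Bool} {x i j : ℕ} (h1 : ¬ i < 2^(m+1)) (h2 : ¬ j < 2^(m+1)) (h3 : i ≠ j) :
    A2r (m+2) b x i j = none := by rw [A2r]; simp [h1, h2, h3]

lemma entry_TR {m : ℕ} {b : Bool} {x i j : ℕ} (h1 : i < 2^(m+1)) (h2 : ¬ j < 2^(m+1)) :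
    A2r (m+2) b x i j = A2r (m+1) false (x+2) i (j - 2^(m+1)) := by rw [A2r]; simp [h1, h2]

lemma entry_BL {m : ℕ} {b : Bool} {x i j : ℕ} (h1 : ¬ i < 2^(m+1)) (h2 : j < 2^(m+1)) :
    A2r (m+2) b x i j = A2r (m+1) true (x+2) (i - 2^(m+1)) j := by rw [A2r]; simp [h1, h2]

lemma Abb : ∀ (m : ℕ) (b : Bool) (x i j i' j' s : ℕ),
    i < 2^(m+1) → j < 2^(m+1) → i' < 2^(m+1) → j' < 2^(m+1) → (i ≠ i' ∨ j ≠ j') →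
    A2r (m+1) b x i j = some s → A2r (m+1) b x i' j' = some s →
    A2r (m+1) b x i j' = none ∧ A2r (m+1) b x i' j = none := by
  intro m
  induction m with
  | zero =>
    intro b x i j i' j' s hi hj hi' hj' hne h0 h1
    exfalso
    cases b <;> interval_cases i <;> interval_cases j <;> interval_cases i' <;>
      interval_cases j' <;> simp [A2r] at h0 h1 <;> omega
  | succ m ih =>
    intro b x i j i' j' s hi hj hi' hj' hne h0 h1
    set n := 2^(m+1) with hn
    have hN : 2^(m+1+1) = n + n := by rw [hn]; ring
    have hmono : ∀ (c : Bool) (y a d : ℕ), a < n → d < n → A2r (m+1) c y a d = some s → y ≤ s :=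
      fun c y a d ha hd h => (Aval m c y a d s ha hd h).1
    have h0 : A2r (m+2) b x i j = some s := h0
    have h1 : A2r (m+2) b x i' j' = some s := h1
    rw [A2r] at h0 h1
    by_cases a1 : i < n <;> by_cases a2 : j < n <;>
      simp only [← hn, a1, a2, if_true, if_false] at h0 <;>
    by_cases a3 : i' < n <;> by_cases a4 : j' < n <;>
      simp only [← hn, a3, a4, if_true, if_false] at h1
    -- TT,TT
    · obtain ⟨e0, hs0⟩ := ite_some h0; obtain ⟨e1, hs1⟩ := ite_some h1
      exact ⟨entry_TL a1 a4 (by omega), entry_TL a3 a2 (by omega)⟩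
    -- TT,TF
    · exfalso; obtain ⟨e0, hs0⟩ := ite_some h0
      have := hmono false (x+2) i' (j'-n) a3 (by omega) h1
      cases b <;> simp at hs0 <;> omega
    -- TT,FT
    · exfalso; obtain ⟨e0, hs0⟩ := ite_some h0
      have := hmono true (x+2) (i'-n) j' (by omega) a4 h1
      cases b <;> simp at hs0 <;> omega
    -- TT,FF
    · exfalso; obtain ⟨e0, hs0⟩ := ite_some h0; obtain ⟨e1, hs1⟩ := ite_some h1
      cases b <;> simp at hs0 hs1 <;> omega
    -- TF,TT
    · exfalso; obtain ⟨e1, hs1⟩ := ite_some h1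
      have := hmono false (x+2) i (j-n) a1 (by omega) h0
      cases b <;> simp at hs1 <;> omega
    -- TF,TF
    · have := ih false (x+2) i (j-n) i' (j'-n) s a1 (by omega) a3 (by omega) (by omega) h0 h1
      rw [entry_TR a1 a4, entry_TR a3 a2]
      exact this
    -- TF,FT
    · have := Across m (x+2) i (j-n) (i'-n) j' s a1 (by omega) (by omega) a4 h0 h1
      exact ⟨entry_TL a1 a4 (by omega), entry_BR a3 a2 (by omega)⟩
    -- TF,FF
    · exfalso; obtain ⟨e1, hs1⟩ := ite_some h1
      have := hmono false (x+2) i (j-n) a1 (by omega) h0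
      cases b <;> simp at hs1 <;> omega
    -- FT,TT
    · exfalso; obtain ⟨e1, hs1⟩ := ite_some h1
      have := hmono true (x+2) (i-n) j (by omega) a2 h0
      cases b <;> simp at hs1 <;> omega
    -- FT,TF
    · have := Across m (x+2) i' (j'-n) (i-n) j s a3 (by omega) (by omega) a2 h1 h0
      exact ⟨entry_BR a1 a4 (by omega), entry_TL a3 a2 (by omega)⟩
    -- FT,FT
    · have := ih true (x+2) (i-n) j (i'-n) j' s (by omega) a2 (by omega) a4 (by omega) h0 h1
      rw [entry_BL a1 a4, entry_BL a3 a2]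
      exact this
    -- FT,FF
    · exfalso; obtain ⟨e1, hs1⟩ := ite_some h1
      have := hmono true (x+2) (i-n) j (by omega) a2 h0
      cases b <;> simp at hs1 <;> omega
    -- FF,TT
    · exfalso; obtain ⟨e0, hs0⟩ := ite_some h0; obtain ⟨e1, hs1⟩ := ite_some h1
      cases b <;> simp at hs0 hs1 <;> omega
    -- FF,TF
    · exfalso; obtain ⟨e0, hs0⟩ := ite_some h0
      have := hmono false (x+2) i' (j'-n) a3 (by omega) h1
      cases b <;> simp at hs0 <;> omega
    -- FF,FT
    · exfalso; obtain ⟨e0, hs0⟩ := ite_some h0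
      have := hmono true (x+2) (i'-n) j' (by omega) a4 h1
      cases b <;> simp at hs0 <;> omega
    -- FF,FF
    · obtain ⟨e0, hs0⟩ := ite_some h0; obtain ⟨e1, hs1⟩ := ite_some h1
      exact ⟨entry_BR a1 a4 (by omega), entry_BR a3 a2 (by omega)⟩

lemma sum_ind_eq' (n k : ℕ) (hk : k < n) : ∑ i ∈ range n, (if i = k then (1:ℕ) else 0) = 1 := by
  rw [← sum_ind_eq n k hk]
  refine Finset.sum_congr rfl fun i _ => ?_
  rcases eq_or_ne i k with rfl | he
  · simp [hk]
  · simp [he, Ne.symm he]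

lemma sum_ind_ne' (n k : ℕ) (hk : k < n) : ∑ i ∈ range n, (if i = k then (0:ℕ) else 1) = n - 1 := by
  rw [← sum_ind_ne n k hk]
  refine Finset.sum_congr rfl fun i _ => ?_
  rcases eq_or_ne i k with rfl | he
  · simp [hk]
  · simp [he, Ne.symm he]

lemma Astars : ∀ (m : ℕ) (b : Bool) (x j : ℕ), j < 2^(m+1) →
    ∑ i ∈ range (2^(m+1)), (if A2r (m+1) b x i j = none then 1 else 0) = 2^(m+1) - (m+2) := by
  intro m
  induction m with
  | zero =>
    intro b x j hj
    have h2 : (2:ℕ)^(0+1) = 2 := by norm_num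
    rw [h2] at hj ⊢
    rw [Finset.sum_range_succ, Finset.sum_range_succ, Finset.sum_range_zero]
    interval_cases j <;> cases b <;> simp [A2r]
  | succ m ih =>
    intro b x j hj
    rw [show m+1+1 = m+2 from rfl] at *
    set n := 2^(m+1) with hn
    have hN : (2:ℕ)^(m+2) = n + n := by rw [hn]; ring
    have hm : m + 2 ≤ n := by
      have := Nat.lt_two_pow_self (n := m+1); omega
    rw [hN, Finset.sum_range_add]
    by_cases hc : j < n
    · have e1 : ∀ i ∈ range n, (if A2r (m+2) b x i j = none then (1:ℕ) else 0)
          = (if i = j then 0 else 1) := by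
        intro i hi; rw [mem_range] at hi
        rcases eq_or_ne i j with rfl | he
        · rw [A2r]; simp [← hn, hi, hc]
        · rw [entry_TL hi hc he]; simp [he]
      have e2 : ∀ i ∈ range n, (if A2r (m+2) b x (n+i) j = none then (1:ℕ) else 0)
          = (if A2r (m+1) true (x+2) i j = none then 1 else 0) := by
        intro i hi
        rw [entry_BL (by omega) hc, Nat.add_sub_cancel_left]
      rw [Finset.sum_congr rfl e1, Finset.sum_congr rfl e2,
        sum_ind_ne' n j hc, ih true (x+2) j hc]
      omega
    · have e1 : ∀ i ∈ range n, (if A2r (m+2) b x i j = none then (1:ℕ) else 0)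
          = (if A2r (m+1) false (x+2) i (j-n) = none then 1 else 0) := by
        intro i hi; rw [mem_range] at hi
        rw [entry_TR hi hc]
      have e2 : ∀ i ∈ range n, (if A2r (m+2) b x (n+i) j = none then (1:ℕ) else 0)
          = (if i = j - n then 0 else 1) := by
        intro i hi; rw [mem_range] at hi
        rcases eq_or_ne i (j-n) with rfl | he
        · rw [A2r]; simp [← hn, show ¬ n + (j-n) < n by omega, hc, show n + (j-n) = j by omega]
        · rw [entry_BR (by omega) hc (by omega)]; simp [he]
      rw [Finset.sum_congr rfl e1, Finset.sum_congr rfl e2,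
        sum_ind_ne' n (j-n) (by omega), ih false (x+2) (j-n) (by omega)]
      omega

lemma diagCnt (n d s : ℕ) (hn : 0 < n) :
    ∑ i ∈ range n, ∑ j ∈ range n,
      (if (if i = j then some d else none) = some s then (1:ℕ) else 0)
      = if d = s then n else 0 := by
  have e : ∀ i ∈ range n, (∑ j ∈ range n,
      (if (if i = j then some d else none) = some s then (1:ℕ) else 0))
      = if d = s then 1 else 0 := by
    intro i hi; rw [mem_range] at hi
    rcases eq_or_ne d s with rfl | hd
    · rw [if_pos rfl]
      have e2 : ∀ j ∈ range n, (if (if i = j then some d else none) = some d then (1:ℕ) else 0)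
          = if i = j then 1 else 0 := by
        intro j _; rcases eq_or_ne i j with rfl | he
        · simp
        · simp [he]
      rw [Finset.sum_congr rfl e2, sum_ind_eq n i hi]
    · rw [if_neg hd]
      refine Finset.sum_eq_zero fun j _ => ?_
      rcases eq_or_ne i j with rfl | he
      · simp [hd]
      · simp [he]
  rw [Finset.sum_congr rfl e, Finset.sum_const, card_range, smul_eq_mul]
  rcases eq_or_ne d s with rfl | hd
  · simp
  · simp [hd]

lemma Acnt : ∀ (m : ℕ) (b : Bool) (x s : ℕ), x ≤ s → s < x + 2*m + 4 →
    ∑ i ∈ range (2^(m+1)), ∑ j ∈ range (2^(m+1)),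
      (if A2r (m+1) b x i j = some s then (1:ℕ) else 0) = 2^m := by
  intro m
  induction m with
  | zero =>
    intro b x s h1 h2
    obtain ⟨k, rfl⟩ : ∃ k, s = x + k := ⟨s - x, by omega⟩
    have hk : k < 4 := by omega
    have h2' : (2:ℕ)^(0+1) = 2 := by norm_num
    rw [h2', pow_zero]
    interval_cases k <;> cases b <;>
      simp only [Finset.sum_range_succ, Finset.sum_range_zero, A2r, reduceIte,
        Option.some.injEq] <;>
      norm_num
  | succ m ih =>
    intro b x s h1 h2
    rw [show m+1+1 = m+2 from rfl] at *
    set n := 2^(m+1) with hn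
    have hN : (2:ℕ)^(m+2) = n + n := by rw [hn]; ring
    have hnpos : 0 < n := by positivity
    have eTL : ∀ i ∈ range n, ∀ j ∈ range n,
        A2r (m+2) b x i j = (if i = j then some (if b then x+1 else x) else none) := by
      intro i hi j hj; rw [mem_range] at hi hj; rw [A2r]; simp [← hn, hi, hj]
    have eBR : ∀ i ∈ range n, ∀ j ∈ range n,
        A2r (m+2) b x (n+i) (n+j) = (if i = j then some (if b then x else x+1) else none) := by
      intro i hi j hj; rw [mem_range] at hi hj; rw [A2r]
      simp only [← hn, show ¬ n + i < n by omega, show ¬ n + j < n by omega, if_false]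
      congr 1
      simp [Nat.add_right_cancel_iff]
    have eTR : ∀ i ∈ range n, ∀ j ∈ range n,
        A2r (m+2) b x i (n+j) = A2r (m+1) false (x+2) i j := by
      intro i hi j hj; rw [mem_range] at hi hj
      rw [entry_TR hi (by omega), Nat.add_sub_cancel_left]
    have eBL : ∀ i ∈ range n, ∀ j ∈ range n,
        A2r (m+2) b x (n+i) j = A2r (m+1) true (x+2) i j := by
      intro i hi j hj; rw [mem_range] at hi hj
      rw [entry_BL (by omega) hj, Nat.add_sub_cancel_left]
    have S_TL : ∑ i ∈ range n, ∑ j ∈ range n,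
        (if A2r (m+2) b x i j = some s then (1:ℕ) else 0)
        = if (if b then x+1 else x) = s then n else 0 := by
      rw [← diagCnt n (if b then x+1 else x) s hnpos]
      exact Finset.sum_congr rfl fun i hi => Finset.sum_congr rfl fun j hj => by
        rw [eTL i hi j hj]
    have S_BR : ∑ i ∈ range n, ∑ j ∈ range n,
        (if A2r (m+2) b x (n+i) (n+j) = some s then (1:ℕ) else 0)
        = if (if b then x else x+1) = s then n else 0 := by
      rw [← diagCnt n (if b then x else x+1) s hnpos]
      exact Finset.sum_congr rfl fun i hi => Finset.sum_congr rfl fun j hj => by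
        rw [eBR i hi j hj]
    have S_TR : ∑ i ∈ range n, ∑ j ∈ range n,
        (if A2r (m+2) b x i (n+j) = some s then (1:ℕ) else 0)
        = ∑ i ∈ range n, ∑ j ∈ range n,
            (if A2r (m+1) false (x+2) i j = some s then (1:ℕ) else 0) :=
      Finset.sum_congr rfl fun i hi => Finset.sum_congr rfl fun j hj => by
        rw [eTR i hi j hj]
    have S_BL : ∑ i ∈ range n, ∑ j ∈ range n,
        (if A2r (m+2) b x (n+i) j = some s then (1:ℕ) else 0)
        = ∑ i ∈ range n, ∑ j ∈ range n,
            (if A2r (m+1) true (x+2) i j = some s then (1:ℕ) else 0) :=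
      Finset.sum_congr rfl fun i hi => Finset.sum_congr rfl fun j hj => by
        rw [eBL i hi j hj]
    rw [hN, quad, S_TL, S_TR, S_BL, S_BR]
    by_cases hs : s < x + 2
    · have hz : ∀ (c : Bool), ∑ i ∈ range n, ∑ j ∈ range n,
          (if A2r (m+1) c (x+2) i j = some s then (1:ℕ) else 0) = 0 := by
        intro c
        refine Finset.sum_eq_zero fun i hi => Finset.sum_eq_zero fun j hj => ?_
        rw [mem_range] at hi hj
        rcases h : A2r (m+1) c (x+2) i j with _ | v
        · simp
        · have := (Aval m c (x+2) i j v hi hj h).1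
          simp only [Option.some.injEq]
          split_ifs with hv
          · omega
          · rfl
      rw [hz false, hz true]
      cases b <;> simp only [Bool.false_eq_true, Bool.true_eq_false, if_true, if_false,
        ite_true, ite_false] <;> split_ifs <;> omega
    · rw [ih false (x+2) s (by omega) (by omega), ih true (x+2) s (by omega) (by omega)]
      have d1 : ¬ (if b then x+1 else x) = s := by cases b <;> simp <;> omega
      have d2 : ¬ (if b then x else x+1) = s := by cases b <;> simp <;> omega
      rw [if_neg d1, if_neg d2]
      omega

lemma ite_some_any {c : Prop} [Decidable c] {d s : ℕ}
    (h : (if c then some d else none) = some s) : c ∧ d = s := by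
  split_ifs at h <;> simp_all

lemma Aexists (m : ℕ) (b : Bool) (x s : ℕ) (h1 : x ≤ s) (h2 : s < x + 2*m + 4) :
    ∃ i j, i < 2^(m+1) ∧ j < 2^(m+1) ∧ A2r (m+1) b x i j = some s := by
  by_contra h
  push_neg at h
  have h0 := Acnt m b x s h1 h2
  have hz : ∑ i ∈ range (2^(m+1)), ∑ j ∈ range (2^(m+1)),
      (if A2r (m+1) b x i j = some s then (1:ℕ) else 0) = 0 :=
    Finset.sum_eq_zero fun i hi => Finset.sum_eq_zero fun j hj => by
      rw [mem_range] at hi hj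
      exact if_neg fun hc => (h i j hi hj) hc
  exact absurd (hz.symm.trans h0) (pow_pos (by norm_num : (0:ℕ) < 2) m).ne

lemma colStars_eq (n : ℕ) (Q : ℕ → ℕ → Option ℕ) (k : Fin n) :
    colStars (fun i j : Fin n => Q i j) k
      = ∑ i ∈ range n, (if Q i (k : ℕ) = none then 1 else 0) := by
  rw [colStars, Finset.card_filter]
  exact Fin.sum_univ_eq_sum_range (fun i => if Q i (k : ℕ) = none then 1 else 0) n

lemma cnt_eq (a b : ℕ) (Q : ℕ → ℕ → Option ℕ) (s : ℕ) :
    ((Finset.univ : Finset (Fin a × Fin b)).filter (fun jk => Q jk.1 jk.2 = some s)).card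
      = ∑ i ∈ range a, ∑ j ∈ range b, (if Q i j = some s then (1:ℕ) else 0) := by
  rw [Finset.card_filter, Fintype.sum_prod_type,
    ← Fin.sum_univ_eq_sum_range (fun i => ∑ j ∈ range b, (if Q i j = some s then (1:ℕ) else 0)) a]
  exact Finset.sum_congr rfl fun i _ =>
    Fin.sum_univ_eq_sum_range (fun j => if Q (i:ℕ) j = some s then (1:ℕ) else 0) b

def liftA (m x t₀ t₁ : ℕ) : ℕ → ℕ → Option ℕ := fun i j =>
  if i < 2^(m+1) then
    if j < 2^(m+1) then A2r (m+1) false x i j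
    else if i + 2^(m+1) = j then some t₀ else none
  else
    if j < 2^(m+1) then (if i = j + 2^(m+1) then some t₁ else none)
    else A2r (m+1) true x (i - 2^(m+1)) (j - 2^(m+1))

lemma liftA_TL {m x t₀ t₁ i j : ℕ} (h1 : i < 2^(m+1)) (h2 : j < 2^(m+1)) :
    liftA m x t₀ t₁ i j = A2r (m+1) false x i j := by simp [liftA, h1, h2]

lemma liftA_TR {m x t₀ t₁ i j : ℕ} (h1 : i < 2^(m+1)) (h2 : ¬ j < 2^(m+1)) :
    liftA m x t₀ t₁ i j = if i + 2^(m+1) = j then some t₀ else none := by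
  simp [liftA, h1, h2]

lemma liftA_BL {m x t₀ t₁ i j : ℕ} (h1 : ¬ i < 2^(m+1)) (h2 : j < 2^(m+1)) :
    liftA m x t₀ t₁ i j = if i = j + 2^(m+1) then some t₁ else none := by
  simp [liftA, h1, h2]

lemma liftA_BR {m x t₀ t₁ i j : ℕ} (h1 : ¬ i < 2^(m+1)) (h2 : ¬ j < 2^(m+1)) :
    liftA m x t₀ t₁ i j = A2r (m+1) true x (i - 2^(m+1)) (j - 2^(m+1)) := by
  simp [liftA, h1, h2]

lemma liftBB (m x t₀ t₁ : ℕ)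
    (ht₀ : ∀ (b : Bool) (i j : ℕ), i < 2^(m+1) → j < 2^(m+1) → A2r (m+1) b x i j ≠ some t₀)
    (ht₁ : ∀ (b : Bool) (i j : ℕ), i < 2^(m+1) → j < 2^(m+1) → A2r (m+1) b x i j ≠ some t₁)
    (hne : t₀ ≠ t₁) :
    ∀ i₁ k₁ i₂ k₂ s : ℕ, i₁ < 2^(m+1) + 2^(m+1) → k₁ < 2^(m+1) + 2^(m+1) →
      i₂ < 2^(m+1) + 2^(m+1) → k₂ < 2^(m+1) + 2^(m+1) → (i₁ ≠ i₂ ∨ k₁ ≠ k₂) →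
      liftA m x t₀ t₁ i₁ k₁ = some s → liftA m x t₀ t₁ i₂ k₂ = some s →
      liftA m x t₀ t₁ i₁ k₂ = none ∧ liftA m x t₀ t₁ i₂ k₁ = none := by
  intro i₁ k₁ i₂ k₂ s hi₁ hk₁ hi₂ hk₂ hne' h1 h2
  set n := 2^(m+1) with hn
  by_cases a1 : i₁ < n <;> by_cases a2 : k₁ < n <;>
  by_cases a3 : i₂ < n <;> by_cases a4 : k₂ < n
  -- TL TL
  · rw [liftA_TL a1 a2] at h1; rw [liftA_TL a3 a4] at h2
    have := Abb m false x i₁ k₁ i₂ k₂ s a1 a2 a3 a4 hne' h1 h2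
    exact ⟨by rw [liftA_TL a1 a4]; exact this.1, by rw [liftA_TL a3 a2]; exact this.2⟩
  -- TL TR
  · rw [liftA_TL a1 a2] at h1; rw [liftA_TR a3 a4] at h2
    obtain ⟨-, rfl⟩ := ite_some_any h2
    exact absurd h1 (ht₀ false i₁ k₁ a1 a2)
  -- TL BL
  · rw [liftA_TL a1 a2] at h1; rw [liftA_BL a3 a4] at h2
    obtain ⟨-, rfl⟩ := ite_some_any h2
    exact absurd h1 (ht₁ false i₁ k₁ a1 a2)
  -- TL BR
  · rw [liftA_TL a1 a2] at h1; rw [liftA_BR a3 a4] at h2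
    have hcr := Across m x i₁ k₁ (i₂-n) (k₂-n) s a1 a2 (by omega) (by omega) h1 h2
    refine ⟨?_, ?_⟩
    · rw [liftA_TR a1 a4]; exact if_neg (by omega)
    · rw [liftA_BL a3 a2]; exact if_neg (by omega)
  -- TR TL
  · rw [liftA_TR a1 a2] at h1; rw [liftA_TL a3 a4] at h2
    obtain ⟨-, rfl⟩ := ite_some_any h1
    exact absurd h2 (ht₀ false i₂ k₂ a3 a4)
  -- TR TR
  · rw [liftA_TR a1 a2] at h1; rw [liftA_TR a3 a4] at h2
    obtain ⟨hc1, rfl⟩ := ite_some_any h1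
    obtain ⟨hc2, -⟩ := ite_some_any h2
    refine ⟨?_, ?_⟩
    · rw [liftA_TR a1 a4]; exact if_neg (by omega)
    · rw [liftA_TR a3 a2]; exact if_neg (by omega)
  -- TR BL
  · rw [liftA_TR a1 a2] at h1; rw [liftA_BL a3 a4] at h2
    obtain ⟨-, rfl⟩ := ite_some_any h1
    obtain ⟨-, h'⟩ := ite_some_any h2
    exact absurd h' hne.symm
  -- TR BR
  · rw [liftA_TR a1 a2] at h1; rw [liftA_BR a3 a4] at h2
    obtain ⟨-, rfl⟩ := ite_some_any h1
    exact absurd h2 (ht₀ true _ _ (by omega) (by omega))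
  -- BL TL
  · rw [liftA_BL a1 a2] at h1; rw [liftA_TL a3 a4] at h2
    obtain ⟨-, rfl⟩ := ite_some_any h1
    exact absurd h2 (ht₁ false i₂ k₂ a3 a4)
  -- BL TR
  · rw [liftA_BL a1 a2] at h1; rw [liftA_TR a3 a4] at h2
    obtain ⟨-, rfl⟩ := ite_some_any h1
    obtain ⟨-, h'⟩ := ite_some_any h2
    exact absurd h' hne
  -- BL BL
  · rw [liftA_BL a1 a2] at h1; rw [liftA_BL a3 a4] at h2
    obtain ⟨hc1, rfl⟩ := ite_some_any h1
    obtain ⟨hc2, -⟩ := ite_some_any h2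
    refine ⟨?_, ?_⟩
    · rw [liftA_BL a1 a4]; exact if_neg (by omega)
    · rw [liftA_BL a3 a2]; exact if_neg (by omega)
  -- BL BR
  · rw [liftA_BL a1 a2] at h1; rw [liftA_BR a3 a4] at h2
    obtain ⟨-, rfl⟩ := ite_some_any h1
    exact absurd h2 (ht₁ true _ _ (by omega) (by omega))
  -- BR TL
  · rw [liftA_BR a1 a2] at h1; rw [liftA_TL a3 a4] at h2
    have hcr := Across m x i₂ k₂ (i₁-n) (k₁-n) s a3 a4 (by omega) (by omega) h2 h1
    refine ⟨?_, ?_⟩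
    · rw [liftA_BL a1 a4]; exact if_neg (by omega)
    · rw [liftA_TR a3 a2]; exact if_neg (by omega)
  -- BR TR
  · rw [liftA_BR a1 a2] at h1; rw [liftA_TR a3 a4] at h2
    obtain ⟨-, rfl⟩ := ite_some_any h2
    exact absurd h1 (ht₀ true _ _ (by omega) (by omega))
  -- BR BL
  · rw [liftA_BR a1 a2] at h1; rw [liftA_BL a3 a4] at h2
    obtain ⟨-, rfl⟩ := ite_some_any h2
    exact absurd h1 (ht₁ true _ _ (by omega) (by omega))
  -- BR BR
  · rw [liftA_BR a1 a2] at h1; rw [liftA_BR a3 a4] at h2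
    have := Abb m true x (i₁-n) (k₁-n) (i₂-n) (k₂-n) s (by omega) (by omega) (by omega)
      (by omega) (by omega) h1 h2
    exact ⟨by rw [liftA_BR a1 a4]; exact this.1, by rw [liftA_BR a3 a2]; exact this.2⟩

/-- **`2^r` recursive family.** For every `r ≥ 1`, the pair
`{A_{2^r}(x), A'_{2^r}(x)}` is Blackburn-compatible w.r.t. `I_{2^r}(t)` for any `t` not
among their integers; each of the two arrays has exactly `2^r − r − 1` stars per column;
and the lifted `2^{r+1} × 2^{r+1}` block array (with `A_{2^r}(x)`, `A'_{2^r}(x)` on the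
diagonal and integer-disjoint copies `I_{2^r}(t₀)`, `I_{2^r}(t₁)` off-diagonal) is a
`2^r`-regular `(2^{r+1}, 2^{r+1}, 2^{r+1} − r − 2, 2r + 4)` PDA. -/
theorem stmt_17 (r x t t₀ t₁ : ℕ) (hr : 1 ≤ r)
    (ht : ∀ (b : Bool) (i j : ℕ), i < 2 ^ r → j < 2 ^ r → A2r r b x i j ≠ some t)
    (ht₀ : ∀ (b : Bool) (i j : ℕ), i < 2 ^ r → j < 2 ^ r → A2r r b x i j ≠ some t₀)
    (ht₁ : ∀ (b : Bool) (i j : ℕ), i < 2 ^ r → j < 2 ^ r → A2r r b x i j ≠ some t₁)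
    (hne : t₀ ≠ t₁) :
    BBCompat (fun i j : Fin (2 ^ r) => A2r r false x i j)
      (fun i j : Fin (2 ^ r) => A2r r true x i j) (Ig (2 ^ r) t) ∧
    (∀ (b : Bool) (k : Fin (2 ^ r)),
      colStars (fun i j : Fin (2 ^ r) => A2r r b x i j) k = 2 ^ r - (r + 1)) ∧
    ∃ S : Finset ℕ,
      IsPDA
        (fun i j : Fin (2 ^ (r + 1)) =>
          if (i : ℕ) < 2 ^ r then
            if (j : ℕ) < 2 ^ r then A2r r false x i j
            else if (i : ℕ) + 2 ^ r = (j : ℕ) then some t₀ else none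
          else
            if (j : ℕ) < 2 ^ r then (if (i : ℕ) = (j : ℕ) + 2 ^ r then some t₁ else none)
            else A2r r true x ((i : ℕ) - 2 ^ r) ((j : ℕ) - 2 ^ r))
        (2 ^ (r + 1) - (r + 2)) S ∧
      IsRegularPDA
        (fun i j : Fin (2 ^ (r + 1)) =>
          if (i : ℕ) < 2 ^ r then
            if (j : ℕ) < 2 ^ r then A2r r false x i j
            else if (i : ℕ) + 2 ^ r = (j : ℕ) then some t₀ else none
          else
            if (j : ℕ) < 2 ^ r then (if (i : ℕ) = (j : ℕ) + 2 ^ r then some t₁ else none)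
            else A2r r true x ((i : ℕ) - 2 ^ r) ((j : ℕ) - 2 ^ r))
        S (2 ^ r) ∧
      S.card = 2 * r + 4 := by
  obtain ⟨m, rfl⟩ : ∃ m, r = m + 1 := ⟨r - 1, by omega⟩
  have hm2 : m + 2 ≤ 2^(m+1) := by have := Nat.lt_two_pow_self (n := m+1); omega
  have hnn : (2:ℕ)^(m+1+1) = 2^(m+1) + 2^(m+1) := by ring
  have np : 0 < 2^(m+1) := by positivity
  refine ⟨?_, ?_, ?_⟩
  · -- BBCompat
    intro i₀ j₀ i₁ j₁ s h0 h1
    have hcr := Across m x ↑i₀ ↑j₀ ↑i₁ ↑j₁ s i₀.isLt j₀.isLt i₁.isLt j₁.isLt h0 h1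
    exact ⟨if_neg fun hc => hcr.1 (congrArg Fin.val hc),
           if_neg fun hc => hcr.2 (congrArg Fin.val hc)⟩
  · -- column stars of the two arrays
    intro b k
    rw [colStars_eq]
    exact Astars m b x ↑k k.isLt
  · -- the lifted PDA
    set n := 2^(m+1) with hn
    have hs₀ : t₀ ∉ Finset.Ico x (x + 2*m + 4) := by
      intro hmem
      rw [Finset.mem_Ico] at hmem
      obtain ⟨i, j, hi, hj, hA⟩ := Aexists m false x t₀ hmem.1 hmem.2
      exact ht₀ false i j hi hj hA
    have hs₁ : t₁ ∉ Finset.Ico x (x + 2*m + 4) := by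
      intro hmem
      rw [Finset.mem_Ico] at hmem
      obtain ⟨i, j, hi, hj, hA⟩ := Aexists m false x t₁ hmem.1 hmem.2
      exact ht₁ false i j hi hj hA
    refine ⟨Finset.Ico x (x + 2*m + 4) ∪ {t₀, t₁}, ?_, ?_, ?_⟩
    · -- IsPDA
      have keycol : ∀ k, k < n + n →
          ∑ i ∈ range (n + n), (if liftA m x t₀ t₁ i k = none then (1:ℕ) else 0)
            = (n + n) - (m + 3) := by
        intro k hk
        rw [Finset.sum_range_add]
        by_cases hc : k < n
        · have e1 : ∀ i ∈ range n, (if liftA m x t₀ t₁ i k = none then (1:ℕ) else 0)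
              = (if A2r (m+1) false x i k = none then 1 else 0) := fun i hi => by
            rw [liftA_TL (mem_range.1 hi) hc]
          have e2 : ∀ i ∈ range n, (if liftA m x t₀ t₁ (n+i) k = none then (1:ℕ) else 0)
              = (if i = k then 0 else 1) := by
            intro i hi
            rw [liftA_BL (by omega) hc]
            rcases eq_or_ne i k with he | he
            · rw [if_pos (show n + i = k + n by omega)]; simp [he]
            · rw [if_neg (show ¬(n + i = k + n) by omega)]; simp [he]
          rw [Finset.sum_congr rfl e1, Finset.sum_congr rfl e2,
            Astars m false x k hc, sum_ind_ne' n k hc]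
          omega
        · have e1 : ∀ i ∈ range n, (if liftA m x t₀ t₁ i k = none then (1:ℕ) else 0)
              = (if i = k - n then 0 else 1) := by
            intro i hi
            rw [liftA_TR (mem_range.1 hi) hc]
            rcases eq_or_ne i (k - n) with he | he
            · rw [if_pos (show i + n = k by omega)]; simp [he]
            · rw [if_neg (show ¬(i + n = k) by omega)]; simp [he]
          have e2 : ∀ i ∈ range n, (if liftA m x t₀ t₁ (n+i) k = none then (1:ℕ) else 0)
              = (if A2r (m+1) true x i (k-n) = none then 1 else 0) := by
            intro i hi
            rw [liftA_BR (by omega) hc, Nat.add_sub_cancel_left]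
          rw [Finset.sum_congr rfl e1, Finset.sum_congr rfl e2,
            sum_ind_ne' n (k-n) (by omega), Astars m true x (k-n) (by omega)]
          omega
      refine ⟨?_, ?_, ?_, ?_⟩
      · -- col stars
        intro k
        show colStars (fun i j : Fin (2^(m+1+1)) => liftA m x t₀ t₁ ↑i ↑j) k
          = 2^(m+1+1) - (m+1+2)
        rw [colStars_eq]
        have h := keycol ↑k (by have := k.isLt; omega)
        rw [← hnn] at h
        exact h
      · -- every symbol occurs
        intro s hs
        rcases Finset.mem_union.1 hs with hIn | hT
        · rw [Finset.mem_Ico] at hIn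
          obtain ⟨i, j, hi, hj, hA⟩ := Aexists m false x s hIn.1 hIn.2
          refine ⟨⟨i, by omega⟩, ⟨j, by omega⟩, ?_⟩
          show liftA m x t₀ t₁ i j = some s
          rw [liftA_TL hi hj]; exact hA
        · rcases Finset.mem_insert.1 hT with rfl | hT'
          · refine ⟨⟨0, by omega⟩, ⟨n, by omega⟩, ?_⟩
            show liftA m x s t₁ 0 n = some s
            rw [liftA_TR np (by omega), if_pos (show 0 + n = n by omega)]
          · rw [Finset.mem_singleton] at hT'
            subst hT'
            refine ⟨⟨n, by omega⟩, ⟨0, by omega⟩, ?_⟩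
            show liftA m x t₀ s n 0 = some s
            rw [liftA_BL (by omega) np, if_pos (show n = 0 + n by omega)]
      · -- all entries lie in S
        intro j k s h
        have h' : liftA m x t₀ t₁ ↑j ↑k = some s := h
        have hj2 : (j:ℕ) < n + n := by have := j.isLt; omega
        have hk2 : (k:ℕ) < n + n := by have := k.isLt; omega
        by_cases c1 : (j:ℕ) < n <;> by_cases c2 : (k:ℕ) < n
        · rw [liftA_TL c1 c2] at h'
          have := Aval m false x _ _ s c1 c2 h'
          exact Finset.mem_union_left _ (Finset.mem_Ico.2 ⟨this.1, this.2⟩)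
        · rw [liftA_TR c1 c2] at h'
          obtain ⟨-, rfl⟩ := ite_some_any h'
          exact Finset.mem_union_right _ (Finset.mem_insert_self _ _)
        · rw [liftA_BL c1 c2] at h'
          obtain ⟨-, rfl⟩ := ite_some_any h'
          exact Finset.mem_union_right _
            (Finset.mem_insert_of_mem (Finset.mem_singleton_self _))
        · rw [liftA_BR c1 c2] at h'
          have := Aval m true x _ _ s (by omega) (by omega) h'
          exact Finset.mem_union_left _ (Finset.mem_Ico.2 ⟨this.1, this.2⟩)
      · -- Blackburn property
        intro j₁ k₁ j₂ k₂ s hne' h1 h2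
        have hv : (↑j₁ : ℕ) ≠ ↑j₂ ∨ (↑k₁ : ℕ) ≠ ↑k₂ := by
          by_contra hc
          push_neg at hc
          exact hne' (Prod.ext (Fin.ext hc.1) (Fin.ext hc.2))
        have h1' : liftA m x t₀ t₁ ↑j₁ ↑k₁ = some s := h1
        have h2' : liftA m x t₀ t₁ ↑j₂ ↑k₂ = some s := h2
        exact liftBB m x t₀ t₁ ht₀ ht₁ hne ↑j₁ ↑k₁ ↑j₂ ↑k₂ s
          (by have := j₁.isLt; omega) (by have := k₁.isLt; omega)
          (by have := j₂.isLt; omega) (by have := k₂.isLt; omega) hv h1' h2'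
    · -- regularity
      intro s hs
      have keycnt : ∑ i ∈ range (n + n), ∑ j ∈ range (n + n),
          (if liftA m x t₀ t₁ i j = some s then (1:ℕ) else 0) = 2^(m+1) := by
        rw [quad]
        have qTL : ∑ i ∈ range n, ∑ j ∈ range n,
            (if liftA m x t₀ t₁ i j = some s then (1:ℕ) else 0)
            = ∑ i ∈ range n, ∑ j ∈ range n,
              (if A2r (m+1) false x i j = some s then (1:ℕ) else 0) :=
          Finset.sum_congr rfl fun i hi => Finset.sum_congr rfl fun j hj => by
            rw [liftA_TL (mem_range.1 hi) (mem_range.1 hj)]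
        have qTR : ∑ i ∈ range n, ∑ j ∈ range n,
            (if liftA m x t₀ t₁ i (n+j) = some s then (1:ℕ) else 0)
            = if t₀ = s then n else 0 := by
          rw [← diagCnt n t₀ s np]
          refine Finset.sum_congr rfl fun i hi => Finset.sum_congr rfl fun j hj => ?_
          rw [liftA_TR (mem_range.1 hi) (by omega)]
          rcases eq_or_ne i j with he | he
          · rw [if_pos (show i + n = n + j by omega), if_pos he]
          · rw [if_neg (show ¬(i + n = n + j) by omega), if_neg he]
        have qBL : ∑ i ∈ range n, ∑ j ∈ range n,
            (if liftA m x t₀ t₁ (n+i) j = some s then (1:ℕ) else 0)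
            = if t₁ = s then n else 0 := by
          rw [← diagCnt n t₁ s np]
          refine Finset.sum_congr rfl fun i hi => Finset.sum_congr rfl fun j hj => ?_
          rw [liftA_BL (by omega) (mem_range.1 hj)]
          rcases eq_or_ne i j with he | he
          · rw [if_pos (show n + i = j + n by omega), if_pos he]
          · rw [if_neg (show ¬(n + i = j + n) by omega), if_neg he]
        have qBR : ∑ i ∈ range n, ∑ j ∈ range n,
            (if liftA m x t₀ t₁ (n+i) (n+j) = some s then (1:ℕ) else 0)
            = ∑ i ∈ range n, ∑ j ∈ range n,
              (if A2r (m+1) true x i j = some s then (1:ℕ) else 0) :=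
          Finset.sum_congr rfl fun i hi => Finset.sum_congr rfl fun j hj => by
            rw [liftA_BR (by omega) (by omega), Nat.add_sub_cancel_left,
              Nat.add_sub_cancel_left]
        rw [qTL, qTR, qBL, qBR]
        have h2n : (2:ℕ)^(m+1) = 2^m + 2^m := by ring
        rcases Finset.mem_union.1 hs with hIn | hT
        · rw [Finset.mem_Ico] at hIn
          rw [Acnt m false x s hIn.1 hIn.2, Acnt m true x s hIn.1 hIn.2,
            if_neg (fun h => hs₀ (by rw [h]; exact Finset.mem_Ico.2 hIn)),
            if_neg (fun h => hs₁ (by rw [h]; exact Finset.mem_Ico.2 hIn))]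
          omega
        · have zf : ∀ (c : Bool) (v : ℕ),
              (∀ (b : Bool) (i j : ℕ), i < 2^(m+1) → j < 2^(m+1) →
                A2r (m+1) b x i j ≠ some v) →
              ∑ i ∈ range n, ∑ j ∈ range n,
                (if A2r (m+1) c x i j = some v then (1:ℕ) else 0) = 0 := by
            intro c v hv
            exact Finset.sum_eq_zero fun i hi => Finset.sum_eq_zero fun j hj =>
              if_neg (hv c i j (mem_range.1 hi) (mem_range.1 hj))
          rcases Finset.mem_insert.1 hT with rfl | hT'
          · rw [zf false s ht₀, zf true s ht₀, if_pos rfl, if_neg (Ne.symm hne)]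
            omega
          · rw [Finset.mem_singleton] at hT'
            subst hT'
            rw [zf false s ht₁, zf true s ht₁, if_pos rfl, if_neg hne]
            omega
      show ((Finset.univ : Finset (Fin (2^(m+1+1)) × Fin (2^(m+1+1)))).filter
        (fun jk => liftA m x t₀ t₁ ↑jk.1 ↑jk.2 = some s)).card = 2^(m+1)
      rw [cnt_eq, hnn]
      exact keycnt
    · -- cardinality of S
      have hdis : Disjoint (Finset.Ico x (x + 2*m + 4)) ({t₀, t₁} : Finset ℕ) := by
        rw [Finset.disjoint_right]
        intro a ha
        rcases Finset.mem_insert.1 ha with rfl | ha'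
        · exact hs₀
        · rw [Finset.mem_singleton] at ha'; subst ha'; exact hs₁
      rw [Finset.card_union_of_disjoint hdis, Nat.card_Ico,
        Finset.card_insert_of_notMem (by simp [hne]), Finset.card_singleton]
      omega
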